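/- Let q be a prime power, n a positive integer with n | q - 1, F a finite field with q elements, a ∈ F such that X^n - a is irreducible over F, K = F[X]/(X^n - a), α ∈ K the image of X, b ∈ F, and h = a^((q-1)/n) ∈ F. Then for every natural number i, (α + b)^(q^i) = h^i · α + b in K (where elements of F are identified with their images in K). -/

import Mathlib

open Polynomial

/-- In the Kummer extension `K = F[X]/(X^n - a)` with `α` the image of `X`,
for `h = a^((q-1)/n)` and any `b ∈ F`, one has `(α + b)^(q^i) = h^i * α + b`. -/
theorem pow_q_pow_eq_frobenius_orbit
    (q n : ℕ) (hq : IsPrimePow q) (hn : 0 < n) (hdvd : n ∣ q - 1)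
    (F : Type*) [Field F] [Fintype F] (hF : Fintype.card F = q)
    (a : F) (hirr : Irreducible (X ^ n - C a : F[X]))
    (b : F) (h : F) (hh : h = a ^ ((q - 1) / n)) (i : ℕ) :
    (AdjoinRoot.root (X ^ n - C a : F[X]) + AdjoinRoot.of (X ^ n - C a : F[X]) b) ^ q ^ i =
      AdjoinRoot.of (X ^ n - C a : F[X]) (h ^ i) * AdjoinRoot.root (X ^ n - C a : F[X]) +
        AdjoinRoot.of (X ^ n - C a : F[X]) b := by
  haveI : Fact (Irreducible (X ^ n - C a : F[X])) := ⟨hirr⟩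
  set f : F[X] := X ^ n - C a with hf
  set K := AdjoinRoot f
  set α := AdjoinRoot.root f
  set φ := AdjoinRoot.of f
  -- characteristic
  set p := ringChar F with hp
  haveI : CharP F p := ringChar.charP F
  obtain ⟨k, hpprime, hcard⟩ := FiniteField.card F p
  haveI : Fact p.Prime := ⟨hpprime⟩
  haveI : CharP K p := charP_of_injective_algebraMap' (A := K) F p
  have hqpk : q = p ^ (k : ℕ) := by rw [← hF, hcard]
  have hadd : ∀ x y : K, (x + y) ^ q = x ^ q + y ^ q := fun x y => by
    rw [hqpk]; exact add_pow_char_pow x y p k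
  -- b^q = b in F
  have hpowcard : ∀ c : F, c ^ q = c := fun c => by
    rw [← hF]; exact FiniteField.pow_card c
  -- α ^ n = φ a
  have hαn : α ^ n = φ a := by
    have := AdjoinRoot.eval₂_root f
    simp only [hf, eval₂_sub, eval₂_pow, eval₂_X, eval₂_C, sub_eq_zero] at this
    exact this
  have hq1 : 1 ≤ q := hq.one_lt.le
  -- α ^ q = φ h * α
  have hαq : α ^ q = φ h * α := by
    have : α ^ q = α ^ (q - 1) * α := by
      rw [← pow_succ, Nat.sub_add_cancel hq1]
    rw [this]
    congr 1
    obtain ⟨m, hm⟩ := hdvd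
    have hmdiv : (q - 1) / n = m := by rw [hm, Nat.mul_div_cancel_left _ hn]
    rw [hm, pow_mul, hαn, ← map_pow, hh, hmdiv]
  induction i with
  | zero => simp
  | succ i ih =>
    rw [pow_succ, pow_mul, ih, hadd, mul_pow, ← map_pow, ← map_pow, hpowcard, hpowcard, hαq,
      ← mul_assoc, ← map_mul, ← pow_succ]
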